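/- Fix n ≥ 2 and (x, y) ∈ ℂⁿ × ℂ^{n−1}. Then (x, y) ∈ G_{1,n} if and only if for every w in the closed unit disc, the point ((y₁ − w·x₂)/(1 − w·x₁), …, (y_{n−1} − w·x_n)/(1 − w·x₁)) belongs to the symmetrized polydisc Γ_{n−1} (in particular 1 − w·x₁ ≠ 0 for all |w| ≤ 1). -/

import Mathlib

open BigOperators

/-- `P_n(z; x) = Σ_{j=0}^{n−1} (−1)^j x_{j+1} z^j`. -/
noncomputable def Pp {N : ℕ} (x : Fin N → ℂ) (z : ℂ) : ℂ :=
  ∑ j : Fin N, (-1 : ℂ) ^ (j : ℕ) * x j * z ^ (j : ℕ)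

/-- `Q_n(z; y) = 1 + Σ_{j=1}^{n−1} (−1)^j y_j z^j`. -/
noncomputable def Qq {M : ℕ} (y : Fin M → ℂ) (z : ℂ) : ℂ :=
  1 + ∑ j : Fin M, (-1 : ℂ) ^ ((j : ℕ) + 1) * y j * z ^ ((j : ℕ) + 1)

/-- Membership in the symmetrized polydisc `𝔾_N`: all roots of
`z^N + Σ_{j=1}^N (−1)^j s_j z^{N−j}` lie in the open unit disc. -/
def memSymPolydisc {N : ℕ} (s : Fin N → ℂ) : Prop :=
  ∀ z : ℂ,
    z ^ N + ∑ j : Fin N, (-1 : ℂ) ^ ((j : ℕ) + 1) * s j * z ^ (N - 1 - (j : ℕ)) = 0 →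
      ‖z‖ < 1

lemma key1 (m : ℕ) (x : Fin (m+2) → ℂ) (y : Fin (m+1) → ℂ) (w z : ℂ) :
    Qq y z - w * Pp x z = (1 - w * x 0) +
      ∑ j : Fin (m+1), (-1:ℂ)^((j:ℕ)+1) * (y j - w * x j.succ) * z^((j:ℕ)+1) := by
  rw [Qq, Pp,
    Fin.sum_univ_succ (f := fun j : Fin (m+2) => (-1:ℂ)^(j:ℕ) * x j * z^(j:ℕ))]
  simp only [Fin.val_zero, Fin.val_succ, pow_zero, mul_one, one_mul]
  rw [mul_add, Finset.mul_sum,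
    show ∀ S1 S2 : ℂ, 1 + S1 - (w * (x 0) + S2) = (1 - w * x 0) + (S1 - S2) from by
      intros; ring, ← Finset.sum_sub_distrib]
  congr 1
  apply Finset.sum_congr rfl
  intro j _
  ring

lemma key2 (m : ℕ) (x : Fin (m+2) → ℂ) (y : Fin (m+1) → ℂ) (w ζ : ℂ)
    (hc : (1:ℂ) - w * x 0 ≠ 0) (hζ : ζ ≠ 0) :
    ζ^(m+1) + ∑ j : Fin (m+1),
        (-1:ℂ)^((j:ℕ)+1) * ((y j - w * x j.succ)/(1 - w * x 0)) * ζ^(m - (j:ℕ))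
      = ζ^(m+1) * (1 - w * x 0)⁻¹ * (Qq y ζ⁻¹ - w * Pp x ζ⁻¹) := by
  rw [key1, mul_add, Finset.mul_sum]
  congr 1
  · field_simp
  · apply Finset.sum_congr rfl
    intro j _
    have h1 : ζ^((j:ℕ)+1) * (ζ⁻¹)^((j:ℕ)+1) = 1 := by
      rw [← mul_pow, mul_inv_cancel₀ hζ, one_pow]
    have hp : ζ^(m+1) = ζ^(m-(j:ℕ)) * ζ^((j:ℕ)+1) := by
      rw [← pow_add]; congr 1; omega
    rw [hp, div_eq_mul_inv]
    linear_combination -((-1:ℂ)^((j:ℕ)+1) * (y j - w * x j.succ) * (1 - w * x 0)⁻¹ *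
      ζ^(m-(j:ℕ))) * h1

/-- `(x,y) ∈ G_{1,n}` iff for every `w` in the closed unit disc, `1 − w·x₁ ≠ 0` and
the point `((y₁ − w x₂)/(1 − w x₁), …, (y_{n−1} − w x_n)/(1 − w x₁))` belongs to the
symmetrized polydisc `𝔾_{n−1}`. -/
theorem stmt9 (m : ℕ) (x : Fin (m+2) → ℂ) (y : Fin (m+1) → ℂ) :
    (∀ z w : ℂ, ‖z‖ ≤ 1 → ‖w‖ ≤ 1 → Qq y z - w * Pp x z ≠ 0) ↔
    (∀ w : ℂ, ‖w‖ ≤ 1 → 1 - w * x 0 ≠ 0 ∧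
      memSymPolydisc (fun j : Fin (m+1) => (y j - w * x j.succ) / (1 - w * x 0))) := by
  constructor
  · intro h w hw
    have hc : (1:ℂ) - w * x 0 ≠ 0 := by
      have h0 := h 0 w (by simp) hw
      rw [key1] at h0
      simpa using h0
    refine ⟨hc, ?_⟩
    intro ζ hζeq
    by_contra habs
    push_neg at habs
    have hζ0 : ζ ≠ 0 := by
      intro h0; rw [h0] at habs; norm_num at habs
    have hz : ‖ζ⁻¹‖ ≤ 1 := by
      rw [norm_inv]; exact inv_le_one_of_one_le₀ habs
    apply h ζ⁻¹ w hz hw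
    have hk := key2 m x y w ζ hc hζ0
    simp only [Nat.add_sub_cancel] at hζeq
    have h2 : ζ^(m+1) * (1 - w * x 0)⁻¹ * (Qq y ζ⁻¹ - w * Pp x ζ⁻¹) = 0 := by
      rw [← hk]; simpa using hζeq
    rcases mul_eq_zero.mp h2 with h3 | h3
    · rcases mul_eq_zero.mp h3 with h4 | h4
      · exact absurd h4 (pow_ne_zero _ hζ0)
      · exact absurd h4 (inv_ne_zero hc)
    · exact h3
  · intro h z w hz hw hF
    obtain ⟨hc, hmem⟩ := h w hw
    by_cases hz0 : z = 0
    · subst hz0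
      rw [key1] at hF
      simp at hF
      exact hc hF
    · have hζ0 : z⁻¹ ≠ 0 := inv_ne_zero hz0
      have hk := key2 m x y w z⁻¹ hc hζ0
      rw [inv_inv] at hk
      have habs : ‖z⁻¹‖ < 1 := by
        apply hmem z⁻¹
        simp only [Nat.add_sub_cancel]
        rw [hk, hF, mul_zero]
      rw [norm_inv] at habs
      have hpos : 0 < ‖z‖ := norm_pos_iff.mpr hz0
      have : 1 < ‖z‖ := by
        rwa [inv_lt_one₀ hpos] at habs
      linarith
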